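/- arXiv:quant-ph/9908070 — 2 statements merged into one kernel-verified Lean document; each statement's English description precedes it below -/
import Mathlib

section
/- With v_i as above (the Pyramid vectors), any three distinct vectors v_i, v_j, v_k (i, j, k pairwise distinct in {0,...,4}) are linearly independent, i.e., span ℝ³. -/
noncomputable def pyrH : ℝ := (1/2) * Real.sqrt (1 + Real.sqrt 5)

noncomputable def pyrN : ℝ := 2 / Real.sqrt (5 + Real.sqrt 5)

/-- The Pyramid vectors in ℝ³. -/
noncomputable def pyrV (i : Fin 5) : EuclideanSpace ℝ (Fin 3) :=
  WithLp.toLp 2 ![pyrN * Real.cos (2 * Real.pi * (i : ℕ) / 5),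
    pyrN * Real.sin (2 * Real.pi * (i : ℕ) / 5),
    pyrN * pyrH]

lemma pyr_helper (p q : ℝ) : Real.sin (2*p) + Real.sin (2*q) - Real.sin (2*p+2*q)
    = 4 * Real.sin p * Real.sin q * Real.sin (p+q) := by
  rw [show 2*p+2*q = 2*(p+q) by ring, Real.sin_two_mul, Real.sin_two_mul,
    Real.sin_two_mul, Real.sin_add, Real.cos_add]
  linear_combination (-(2*Real.sin p*Real.cos p)) * Real.sin_sq_add_cos_sq q
    + (-(2*Real.sin q*Real.cos q)) * Real.sin_sq_add_cos_sq p

lemma pyr_trig (a b c : ℝ) : Real.sin (b-a) + Real.sin (c-b) - Real.sin (c-a)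
    = 4 * Real.sin ((b-a)/2) * Real.sin ((c-b)/2) * Real.sin ((c-a)/2) := by
  have := pyr_helper ((b-a)/2) ((c-b)/2)
  rw [show 2*((b-a)/2) = b-a by ring, show 2*((c-b)/2) = c-b by ring,
    show b-a+(c-b) = c-a by ring,
    show (b-a)/2+(c-b)/2 = (c-a)/2 by ring] at this
  exact this

lemma pyrN_pos : 0 < pyrN := by
  unfold pyrN
  have h5 : (0:ℝ) < 5 + Real.sqrt 5 := by positivity
  positivity

lemma pyrH_pos : 0 < pyrH := by
  unfold pyrH
  have : (0:ℝ) < 1 + Real.sqrt 5 := by positivity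
  positivity

lemma pyr_sin_ne' {d : ℝ} (hd : d ≠ 0) (h4 : |d| < 5) : Real.sin (Real.pi * d / 5) ≠ 0 := by
  have hpi := Real.pi_pos
  rcases lt_or_gt_of_ne hd with h | h
  · have : Real.sin (Real.pi * (-d) / 5) > 0 := by
      apply Real.sin_pos_of_pos_of_lt_pi
      · nlinarith
      · rw [abs_lt] at h4; nlinarith
    rw [show Real.pi * d / 5 = -(Real.pi * (-d) / 5) by ring, Real.sin_neg]
    linarith
  · have : Real.sin (Real.pi * d / 5) > 0 := by
      apply Real.sin_pos_of_pos_of_lt_pi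
      · positivity
      · rw [abs_lt] at h4; nlinarith
    linarith

lemma pyr_sin_ne (i j : Fin 5) (h : i ≠ j) :
    Real.sin ((2 * Real.pi * (j:ℕ) / 5 - 2 * Real.pi * (i:ℕ) / 5) / 2) ≠ 0 := by
  have hij : ((j:ℕ):ℝ) ≠ ((i:ℕ):ℝ) := by
    exact_mod_cast fun hh => h (Fin.ext (Nat.cast_injective hh)).symm
  have hi : ((i:ℕ):ℝ) < 5 := by exact_mod_cast i.isLt
  have hj : ((j:ℕ):ℝ) < 5 := by exact_mod_cast j.isLt
  have hi0 : (0:ℝ) ≤ ((i:ℕ):ℝ) := Nat.cast_nonneg _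
  have hj0 : (0:ℝ) ≤ ((j:ℕ):ℝ) := Nat.cast_nonneg _
  have := pyr_sin_ne' (d := ((j:ℕ):ℝ) - ((i:ℕ):ℝ)) (sub_ne_zero.2 hij)
    (by rw [abs_lt]; constructor <;> linarith)
  rw [show (2 * Real.pi * (j:ℕ) / 5 - 2 * Real.pi * (i:ℕ) / 5) / 2
      = Real.pi * (((j:ℕ):ℝ) - ((i:ℕ):ℝ)) / 5 by ring]
  exact this

lemma pyr_det (i j k : Fin 5) :
    (Matrix.of ![(pyrV i : Fin 3 → ℝ), pyrV j, pyrV k]).det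
    = pyrN^3 * pyrH * (4 * Real.sin ((2 * Real.pi * (j:ℕ) / 5 - 2 * Real.pi * (i:ℕ) / 5)/2)
        * Real.sin ((2 * Real.pi * (k:ℕ) / 5 - 2 * Real.pi * (j:ℕ) / 5)/2)
        * Real.sin ((2 * Real.pi * (k:ℕ) / 5 - 2 * Real.pi * (i:ℕ) / 5)/2)) := by
  set a := 2 * Real.pi * (i:ℕ) / 5
  set b := 2 * Real.pi * (j:ℕ) / 5
  set c := 2 * Real.pi * (k:ℕ) / 5
  rw [Matrix.det_fin_three]
  simp only [Matrix.of_apply, pyrV, Matrix.cons_val', Matrix.cons_val_zero, Matrix.cons_val_one,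
    Matrix.head_cons, Matrix.empty_val', Matrix.cons_val_fin_one, Matrix.head_fin_const,
    Matrix.cons_val_two, Matrix.tail_cons, WithLp.ofLp_toLp]
  rw [show pyrN^3 * pyrH * (4 * Real.sin ((b-a)/2) * Real.sin ((c-b)/2) * Real.sin ((c-a)/2))
      = pyrN^3 * pyrH * ((4 * Real.sin ((b-a)/2)) * Real.sin ((c-b)/2) * Real.sin ((c-a)/2)) by ring]
  rw [show (4 * Real.sin ((b-a)/2)) * Real.sin ((c-b)/2) * Real.sin ((c-a)/2)
      = Real.sin (b-a) + Real.sin (c-b) - Real.sin (c-a) by linear_combination -pyr_trig a b c]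
  rw [Real.sin_sub, Real.sin_sub, Real.sin_sub]
  ring

/-- Any three distinct Pyramid vectors are linearly independent (hence span ℝ³). -/
theorem stmt1 (i j k : Fin 5) (hij : i ≠ j) (hik : i ≠ k) (hjk : j ≠ k) :
    LinearIndependent ℝ ![pyrV i, pyrV j, pyrV k] := by
  have : LinearIndependent ℝ (fun l => (Matrix.of ![(pyrV i : Fin 3 → ℝ), pyrV j, pyrV k]) l) := by
    change LinearIndependent ℝ (Matrix.of ![(pyrV i : Fin 3 → ℝ), pyrV j, pyrV k]).row
    rw [Matrix.linearIndependent_rows_iff_isUnit, Matrix.isUnit_iff_isUnit_det, isUnit_iff_ne_zero]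
    rw [pyr_det i j k]
    have hN := pyrN_pos
    have hH := pyrH_pos
    exact mul_ne_zero (mul_ne_zero (by positivity) (by positivity))
      (mul_ne_zero (mul_ne_zero (mul_ne_zero (by norm_num) (pyr_sin_ne i j hij))
        (pyr_sin_ne j k hjk)) (pyr_sin_ne i k hik))
  exact LinearIndependent.of_comp (WithLp.linearEquiv 2 ℝ (Fin 3 → ℝ)).toLinearMap
    (by convert this using 1; ext l m; fin_cases l <;> rfl; rfl)
end

section
/- The five product states ψ_i = v_i ⊗ v_{2i mod 5} (i = 0,...,4) in ℝ³ ⊗ ℝ³ are pairwise orthogonal. -/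
lemma inner_pyrV (i j : Fin 5) :
    (inner ℝ (pyrV i) (pyrV j) : ℝ)
      = pyrN^2 * (Real.cos (2 * Real.pi * (((i:ℕ):ℝ) - ((j:ℕ):ℝ)) / 5) + pyrH^2) := by
  have h : 2 * Real.pi * (((i:ℕ):ℝ) - ((j:ℕ):ℝ)) / 5
      = 2 * Real.pi * (i:ℕ) / 5 - 2 * Real.pi * (j:ℕ) / 5 := by ring
  rw [h, Real.cos_sub]
  simp [pyrV, PiLp.inner_apply, Fin.sum_univ_three]
  ring

lemma cos_key (d : ℝ) (hd : d = 2 ∨ d = -2 ∨ d = 3 ∨ d = -3) :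
    Real.cos (2 * Real.pi * d / 5) = -((1 + Real.sqrt 5) / 4) := by
  have c5 := Real.cos_pi_div_five
  rcases hd with h|h|h|h <;> subst h
  · have e : 2*Real.pi*2/5 = Real.pi - Real.pi/5 := by ring
    rw [e, Real.cos_pi_sub, c5]
  · have e : 2*Real.pi*(-2)/5 = -(Real.pi - Real.pi/5) := by ring
    rw [e, Real.cos_neg, Real.cos_pi_sub, c5]
  · have e : 2*Real.pi*3/5 = 2*Real.pi - (Real.pi - Real.pi/5) := by ring
    rw [e, Real.cos_two_pi_sub, Real.cos_pi_sub, c5]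
  · have e : 2*Real.pi*(-3)/5 = -(2*Real.pi - (Real.pi - Real.pi/5)) := by ring
    rw [e, Real.cos_neg, Real.cos_two_pi_sub, Real.cos_pi_sub, c5]

lemma pyrH_sq : pyrH^2 = (1 + Real.sqrt 5) / 4 := by
  have h5 : (0:ℝ) ≤ Real.sqrt 5 := Real.sqrt_nonneg 5
  rw [pyrH, mul_pow, Real.sq_sqrt (by linarith)]
  ring

lemma key (i j : Fin 5)
    (h : (i:ℕ) + 2 = (j:ℕ) ∨ (j:ℕ) + 2 = (i:ℕ) ∨ (i:ℕ) + 3 = (j:ℕ) ∨ (j:ℕ) + 3 = (i:ℕ)) :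
    (inner ℝ (pyrV i) (pyrV j) : ℝ) = 0 := by
  have hd : ((i:ℕ):ℝ) - ((j:ℕ):ℝ) = 2 ∨ ((i:ℕ):ℝ) - ((j:ℕ):ℝ) = -2 ∨
      ((i:ℕ):ℝ) - ((j:ℕ):ℝ) = 3 ∨ ((i:ℕ):ℝ) - ((j:ℕ):ℝ) = -3 := by
    rcases h with h|h|h|h
    · right; left
      have : ((i:ℕ):ℝ) + 2 = ((j:ℕ):ℝ) := by exact_mod_cast h
      linarith
    · left
      have : ((j:ℕ):ℝ) + 2 = ((i:ℕ):ℝ) := by exact_mod_cast h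
      linarith
    · right; right; right
      have : ((i:ℕ):ℝ) + 3 = ((j:ℕ):ℝ) := by exact_mod_cast h
      linarith
    · right; right; left
      have : ((j:ℕ):ℝ) + 3 = ((i:ℕ):ℝ) := by exact_mod_cast h
      linarith
  rw [inner_pyrV, cos_key _ hd, pyrH_sq]
  ring

/-- The five product states ψ_i = v_i ⊗ v_{2i mod 5} are pairwise orthogonal:
since ⟨a⊗b, c⊗d⟩ = ⟨a,c⟩⟨b,d⟩, orthogonality of ψ_i and ψ_j is the vanishing of
⟨v_i,v_j⟩·⟨v_{2i mod 5}, v_{2j mod 5}⟩.  (Multiplication in `Fin 5` is mod 5.) -/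
theorem stmt2 (i j : Fin 5) (hij : i ≠ j) :
    (inner ℝ (pyrV i) (pyrV j) : ℝ) * (inner ℝ (pyrV (2 * i)) (pyrV (2 * j)) : ℝ) = 0 := by
  fin_cases i <;> fin_cases j <;>
    first
    | exact absurd rfl hij
    | exact mul_eq_zero.mpr (Or.inl (key _ _ (by decide)))
    | exact mul_eq_zero.mpr (Or.inr (key _ _ (by decide)))
end
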